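/- (Reduced ODE identity.) Let G_U be a connected labeled multidigraph (containing node * with defining function q(x) = 1/Σ_{τ∈Θ(*)} π(τ)). For each edge e let w_e ∈ ℝ^p be an associated vector (the projected reaction vector ζ(y'_{r(e)} − y_{r(e)})). Then Σ_{e ∈ G_U} (Σ_{τ ∈ Θ(s(e))} π(τ)) π(e) w_e = Σ_{σ cycle of G_U} Π(σ) Σ_{e∈σ} w_e, where Π(σ) = Σ_{γ ∈ Γ(σ)} π(γ) and Γ(σ) is the set of subgraphs τ ∪ {e} with e ∈ σ and τ a spanning tree rooted at s(e) containing σ∖{e}. -/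

import Mathlib

/-- A multidigraph: a set of nodes `V`, a set of edges `E`, and source/target maps. -/
structure Multidigraph (V E : Type*) where
  src : E → V
  tgt : E → V

namespace Multidigraph

variable {V E : Type*}

/-- One-step edge relation using only the edges in `τ`. -/
def Rel (G : Multidigraph V E) (τ : Set E) (a b : V) : Prop :=
  ∃ e ∈ τ, G.src e = a ∧ G.tgt e = b

/-- Undirected (symmetrized) one-step relation. -/
def URel (G : Multidigraph V E) (a b : V) : Prop :=
  G.Rel Set.univ a b ∨ G.Rel Set.univ b a

/-- Node set of the (weakly) connected component containing `v`. -/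
def component (G : Multidigraph V E) (v : V) : Set V :=
  {w | Relation.ReflTransGen G.URel v w}

/-- `τ` is a spanning tree of the subgraph of `G` induced on the node set `W`,
rooted at `r`: all edges stay inside `W`, every non-root node of `W` has exactly
one outgoing edge in `τ`, the root has none, and every node of `W` reaches `r`
through `τ`. -/
def IsSpanningTreeOn (G : Multidigraph V E) (W : Set V) (τ : Finset E) (r : V) : Prop :=
  (∀ e ∈ τ, G.src e ∈ W ∧ G.tgt e ∈ W) ∧
  (∀ v ∈ W, v ≠ r → ∃! e, e ∈ τ ∧ G.src e = v) ∧
  (∀ e ∈ τ, G.src e ≠ r) ∧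
  (∀ v ∈ W, Relation.ReflTransGen (G.Rel (τ : Set E)) v r)

/-- Spanning tree of `G` rooted at `r`. -/
def IsSpanningTree (G : Multidigraph V E) (τ : Finset E) (r : V) : Prop :=
  G.IsSpanningTreeOn Set.univ τ r

/-- A cycle: a nonempty closed directed path with pairwise distinct nodes. -/
def IsCycle (G : Multidigraph V E) (l : List E) : Prop :=
  l ≠ [] ∧ (l.map G.src).Nodup ∧
  l.Chain' (fun a b => G.tgt a = G.src b) ∧
  ∀ h : l ≠ [], G.tgt (l.getLast h) = G.src (l.head h)

def StronglyConnected (G : Multidigraph V E) : Prop :=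
  ∀ a b : V, Relation.ReflTransGen (G.Rel Set.univ) a b

def Connected (G : Multidigraph V E) : Prop :=
  ∀ a b : V, Relation.ReflTransGen G.URel a b

/-- Incidence matrix of a multidigraph. -/
def incidence [DecidableEq V] (G : Multidigraph V E) : Matrix V E ℝ := fun v e =>
  if G.tgt e = v ∧ G.src e ≠ v then 1
  else if G.src e = v ∧ G.tgt e ≠ v then (-1 : ℝ) else 0

end Multidigraph

open scoped Classical

namespace Stmt16

open Multidigraph

variable {V E : Type} 

/-- `δ` is a functional subgraph: every node has exactly one outgoing edge in `δ`. -/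
def Func (G : Multidigraph V E) (δ : Finset E) : Prop :=
  ∀ v : V, ∃! f, f ∈ δ ∧ G.src f = v

/-- The unique outgoing edge of `v` inside `δ` (when it exists). -/
noncomputable def nxt [Nonempty E] (G : Multidigraph V E) (δ : Finset E) (v : V) : E :=
  if h : ∃ f, f ∈ δ ∧ G.src f = v then h.choose else Classical.arbitrary E

/-- One step of the functional dynamics of `δ`. -/
noncomputable def stp [Nonempty E] (G : Multidigraph V E) (δ : Finset E) (v : V) : V :=
  G.tgt (nxt G δ v)

variable [Nonempty E] {G : Multidigraph V E} {δ τ : Finset E}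

lemma nxt_mem (h : Func G δ) (v : V) : nxt G δ v ∈ δ := by
  obtain ⟨f, hf, -⟩ := h v
  rw [nxt, dif_pos ⟨f, hf⟩]
  exact (Exists.choose_spec (⟨f, hf⟩ : ∃ f, f ∈ δ ∧ G.src f = v)).1

lemma src_nxt (h : Func G δ) (v : V) : G.src (nxt G δ v) = v := by
  obtain ⟨f, hf, -⟩ := h v
  rw [nxt, dif_pos ⟨f, hf⟩]
  exact (Exists.choose_spec (⟨f, hf⟩ : ∃ f, f ∈ δ ∧ G.src f = v)).2

lemma nxt_eq (h : Func G δ) {f : E} {v : V} (hf : f ∈ δ) (hs : G.src f = v) :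
    nxt G δ v = f := by
  obtain ⟨g, hg, huniq⟩ := h v
  rw [huniq f ⟨hf, hs⟩, ← huniq (nxt G δ v) ⟨nxt_mem h v, src_nxt h v⟩]

lemma reach_iter {α : Type*} {r : α → α → Prop} {f : α → α} (h : ∀ a b, r a b → b = f a)
    {v u : α} (hvu : Relation.ReflTransGen r v u) : ∃ k, f^[k] v = u := by
  induction hvu using Relation.ReflTransGen.head_induction_on with
  | refl => exact ⟨0, rfl⟩
  | head hab _ ih =>
      obtain ⟨k, hk⟩ := ih
      exact ⟨k + 1, by rw [Function.iterate_succ_apply, ← h _ _ hab]; exact hk⟩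

lemma iter_mod {α : Type*} {f : α → α} {r : α} {n : ℕ} (hn : 0 < n) (h : f^[n] r = r)
    (k : ℕ) : f^[k] r = f^[k % n] r := by
  induction k using Nat.strong_induction_on with
  | _ k ih =>
    rcases lt_or_ge k n with hk | hk
    · rw [Nat.mod_eq_of_lt hk]
    · have h1 : k = (k - n) + n := (Nat.sub_add_cancel hk).symm
      conv_lhs => rw [h1]
      rw [Function.iterate_add_apply, h, ih _ (by omega), Nat.mod_eq_sub_mod hk]


/-- Edges of `δ` whose source lies on the forward orbit of `r`. -/
noncomputable def orbE (G : Multidigraph V E) [Nonempty E] (δ : Finset E) (r : V) : Finset E :=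
  δ.filter (fun f => ∃ k, G.src f = (stp G δ)^[k] r)

/-- First return time of `r` under the dynamics of `δ`. -/
noncomputable def period (G : Multidigraph V E) [Nonempty E] (δ : Finset E) (r : V) : ℕ :=
  if h : ∃ n, 0 < n ∧ (stp G δ)^[n] r = r then Nat.find h else 0

/-- The cycle through `r` in the functional graph `δ`. -/
noncomputable def cycList (G : Multidigraph V E) [Nonempty E] (δ : Finset E) (r : V) : List E :=
  (List.range (period G δ r)).map (fun i => nxt G δ ((stp G δ)^[i] r))

lemma period_spec {r : V} (h : ∃ n, 0 < n ∧ (stp G δ)^[n] r = r) :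
    0 < period G δ r ∧ (stp G δ)^[period G δ r] r = r ∧
      ∀ m, 0 < m → (stp G δ)^[m] r = r → period G δ r ≤ m := by
  rw [period, dif_pos h]
  exact ⟨(Nat.find_spec h).1, (Nat.find_spec h).2,
    fun m hm hmr => Nat.find_le ⟨hm, hmr⟩⟩

/-- Master lemma for a cycle list sitting inside a functional graph. -/
lemma cycle_master (hfunc : Func G δ) {l : List E} (hl : G.IsCycle l)
    (hsub : ∀ f ∈ l, f ∈ δ) {e0 : E} (he0 : e0 ∈ l) :
    (∃ n, 0 < n ∧ (stp G δ)^[n] (G.src e0) = G.src e0) ∧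
    (∀ g ∈ l, ∃ k, (stp G δ)^[k] (G.src e0) = G.src g) ∧
    l.toFinset = orbE G δ (G.src e0) := by
  have hn : 0 < l.length := List.length_pos_iff.mpr hl.1
  have gel : ∀ {a b : ℕ} (ha : a < l.length) (hb : b < l.length), a = b →
      (l[a]'ha) = (l[b]'hb) := by
    intro a b ha hb h; subst h; rfl
  -- closing of the cycle at the level of getElem
  have htgt : ∀ (j : ℕ) (hj : j < l.length),
      G.tgt (l[j]'hj) = G.src (l[(j+1) % l.length]'(Nat.mod_lt _ hn)) := by
    intro j hj
    rcases lt_or_eq_of_le (Nat.succ_le_of_lt hj) with hj1 | hj1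
    · have := List.isChain_iff_getElem.mp hl.2.2.1 j (by omega)
      rw [this]
      exact congrArg G.src (gel _ _ (Nat.mod_eq_of_lt hj1).symm)
    · have hlast := hl.2.2.2 hl.1
      rw [List.getLast_eq_getElem, List.head_eq_getElem] at hlast
      have hj1' : j + 1 = l.length := hj1
      have h0 : (j+1) % l.length = 0 := by rw [hj1', Nat.mod_self]
      rw [gel hj (by omega) (by omega : j = l.length - 1), hlast]
      exact congrArg G.src (gel _ _ h0.symm)
  -- each edge of the cycle is the `nxt` of its source
  have hnxt : ∀ (j : ℕ) (hj : j < l.length), nxt G δ (G.src (l[j]'hj)) = l[j]'hj := by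
    intro j hj
    exact nxt_eq hfunc (hsub _ (List.getElem_mem hj)) rfl
  -- iterating `stp` walks around the cycle
  have key : ∀ (i0 : ℕ) (hi0 : i0 < l.length) (k : ℕ),
      (stp G δ)^[k] (G.src (l[i0]'hi0)) =
        G.src (l[(i0 + k) % l.length]'(Nat.mod_lt _ hn)) := by
    intro i0 hi0 k
    induction k with
    | zero => exact congrArg G.src (gel _ _ (by rw [Nat.add_zero, Nat.mod_eq_of_lt hi0])).symm
    | succ k ih =>
      rw [Function.iterate_succ_apply', ih]
      have hjlt : (i0 + k) % l.length < l.length := Nat.mod_lt _ hn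
      have h1 : stp G δ (G.src (l[(i0+k) % l.length]'hjlt)) =
          G.tgt (l[(i0+k) % l.length]'hjlt) := by
        rw [stp, hnxt _ hjlt]
      rw [h1, htgt _ hjlt]
      exact congrArg G.src (gel _ _ (by rw [Nat.mod_add_mod, Nat.add_assoc]))
  obtain ⟨i0, hi0, hi0e⟩ := List.mem_iff_getElem.mp he0
  refine ⟨⟨l.length, hn, ?_⟩, ?_, ?_⟩
  · rw [← hi0e, key i0 hi0 l.length]
    exact congrArg G.src (gel _ _ (by rw [Nat.add_mod_right, Nat.mod_eq_of_lt hi0]))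
  · intro g hg
    obtain ⟨j, hj, hje⟩ := List.mem_iff_getElem.mp hg
    refine ⟨l.length + j - i0, ?_⟩
    rw [← hi0e, key i0 hi0]
    rw [← hje]
    have hidx : (i0 + (l.length + j - i0)) % l.length = j := by
      have h2 : i0 + (l.length + j - i0) = l.length + j := by omega
      rw [h2, Nat.add_mod_left, Nat.mod_eq_of_lt hj]
    exact congrArg G.src (gel _ _ hidx)
  · ext f
    simp only [List.mem_toFinset, orbE, Finset.mem_filter]
    constructor
    · intro hf
      obtain ⟨j, hj, hje⟩ := List.mem_iff_getElem.mp hf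
      refine ⟨hsub _ hf, l.length + j - i0, ?_⟩
      rw [← hi0e, key i0 hi0, ← hje]
      have hidx : j = (i0 + (l.length + j - i0)) % l.length := by
        have h2 : i0 + (l.length + j - i0) = l.length + j := by omega
        rw [h2, Nat.add_mod_left, Nat.mod_eq_of_lt hj]
      exact congrArg G.src (gel _ _ hidx)
    · rintro ⟨hfδ, k, hk⟩
      rw [← hi0e, key i0 hi0] at hk
      have h3 := nxt_eq hfunc hfδ hk
      rw [hnxt _ (Nat.mod_lt _ hn)] at h3
      rw [← h3]
      exact List.getElem_mem _

/-- The constructed `cycList` is a genuine cycle. -/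
lemma cycList_isCycle (hfunc : Func G δ) {r : V}
    (hret : ∃ n, 0 < n ∧ (stp G δ)^[n] r = r) :
    G.IsCycle (cycList G δ r) ∧ nxt G δ r ∈ cycList G δ r ∧
      (cycList G δ r).toFinset = orbE G δ r := by
  obtain ⟨hpos, hper, hmin⟩ := period_spec hret
  set n := period G δ r with hn
  have hlen : (cycList G δ r).length = n := by simp [cycList, hn]
  have hne : cycList G δ r ≠ [] := by
    rw [← List.length_pos_iff]; omega
  have hgetl : ∀ (i : ℕ) (hi : i < (cycList G δ r).length),
      (cycList G δ r)[i]'hi = nxt G δ ((stp G δ)^[i] r) := by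
    intro i hi
    simp [cycList]
  have hinj : ∀ i < n, ∀ j < n, (stp G δ)^[i] r = (stp G δ)^[j] r → i = j := by
    intro i hi j hj hij
    by_contra hne'
    wlog h : i < j generalizing i j
    · exact this j hj i hi hij.symm (Ne.symm hne') (by omega)
    · have h1 : (stp G δ)^[(n - j) + i] r = r := by
        rw [Function.iterate_add_apply, hij, ← Function.iterate_add_apply]
        have : n - j + j = n := by omega
        rw [this, hper]
      have := hmin _ (by omega) h1
      omega
  constructor
  · refine ⟨hne, ?_, ?_, ?_⟩
    · have hmap : (cycList G δ r).map G.src =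
          (List.range n).map (fun i => (stp G δ)^[i] r) := by
        rw [cycList, List.map_map]
        exact List.map_congr_left (fun i _ => src_nxt hfunc _)
      rw [hmap]
      exact List.Nodup.map_on
        (fun i hi j hj => hinj i (List.mem_range.mp hi) j (List.mem_range.mp hj))
        (List.nodup_range (n := n))
    · refine List.isChain_iff_getElem.mpr ?_
      intro i hi
      rw [hgetl i (by omega), hgetl (i+1) (by omega)]
      rw [src_nxt hfunc]
      exact (Function.iterate_succ_apply' (stp G δ) i r).symm
    · intro h
      rw [List.getLast_eq_getElem, List.head_eq_getElem, hgetl _ (by omega),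
        hgetl _ (by omega), src_nxt hfunc]
      have h2 : (stp G δ)^[(cycList G δ r).length - 1 + 1] r = (stp G δ)^[0] r := by
        rw [hlen]
        have h1 : n - 1 + 1 = n := by omega
        rw [h1, hper]; rfl
      exact (Function.iterate_succ_apply' (stp G δ)
        ((cycList G δ r).length - 1) r).symm.trans h2
  constructor
  · rw [cycList]
    refine List.mem_map.mpr ⟨0, List.mem_range.mpr (by omega), rfl⟩
  · ext f
    simp only [List.mem_toFinset, orbE, Finset.mem_filter, cycList, List.mem_map,
      List.mem_range]
    constructor
    · rintro ⟨i, hi, rfl⟩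
      exact ⟨nxt_mem hfunc _, i, src_nxt hfunc _⟩
    · rintro ⟨hfδ, k, hk⟩
      refine ⟨k % n, Nat.mod_lt _ hpos, ?_⟩
      rw [← iter_mod hpos hper k]
      exact nxt_eq hfunc hfδ hk


lemma tree_not_mem {e : E} (h : G.IsSpanningTree τ (G.src e)) : e ∉ τ :=
  fun he => h.2.2.1 e he rfl

lemma func_insert {r : V} (h : G.IsSpanningTree τ r) {e : E} (he : G.src e = r) :
    Func G (insert e τ) := by
  intro v
  by_cases hv : v = r
  · subst hv
    refine ⟨e, ⟨Finset.mem_insert_self e τ, he⟩, ?_⟩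
    rintro g ⟨hg, hgs⟩
    rcases Finset.mem_insert.mp hg with hg | hg
    · exact hg
    · exact absurd hgs (h.2.2.1 g hg)
  · obtain ⟨f, ⟨hfτ, hfs⟩, huniq⟩ := h.2.1 v (Set.mem_univ v) hv
    refine ⟨f, ⟨Finset.mem_insert_of_mem hfτ, hfs⟩, ?_⟩
    rintro g ⟨hg, hgs⟩
    rcases Finset.mem_insert.mp hg with hg | hg
    · subst hg; exact absurd (hgs.symm.trans he) hv
    · exact huniq g ⟨hg, hgs⟩

lemma tree_rel_step (hfunc : Func G δ) (hτδ : τ ⊆ δ) :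
    ∀ a b : V, G.Rel (↑τ : Set E) a b → b = stp G δ a := by
  rintro a b ⟨f, hf, hs, ht⟩
  rw [← ht, stp, nxt_eq hfunc (hτδ (Finset.mem_coe.mp hf)) hs]

lemma tree_rotate (hfunc : Func G δ) {e : E} (he : e ∈ δ)
    (hreach : ∀ v, ∃ k, (stp G δ)^[k] v = G.src e) :
    G.IsSpanningTree (δ.erase e) (G.src e) := by
  have hnr : nxt G δ (G.src e) = e := nxt_eq hfunc he rfl
  have hne : ∀ v : V, v ≠ G.src e → nxt G δ v ≠ e := by
    intro v hv h1
    exact hv (by rw [← src_nxt hfunc v, h1])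
  refine ⟨fun _ _ => ⟨trivial, trivial⟩, ?_, ?_, ?_⟩
  · intro v _ hv
    refine ⟨nxt G δ v, ⟨Finset.mem_erase.mpr ⟨hne v hv, nxt_mem hfunc v⟩,
      src_nxt hfunc v⟩, ?_⟩
    rintro g ⟨hg, hgs⟩
    exact (nxt_eq hfunc (Finset.mem_of_mem_erase hg) hgs).symm
  · intro f hf hfs
    have h1 := nxt_eq hfunc (Finset.mem_of_mem_erase hf) hfs
    rw [hnr] at h1
    exact (Finset.mem_erase.mp hf).1 h1.symm
  · intro v _
    obtain ⟨k, hk⟩ := hreach v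
    have aux : ∀ (k : ℕ) (v : V), (stp G δ)^[k] v = G.src e →
        Relation.ReflTransGen (G.Rel (↑(δ.erase e) : Set E)) v (G.src e) := by
      intro k
      induction k with
      | zero => intro v h; exact h ▸ Relation.ReflTransGen.refl
      | succ k ih =>
        intro v h
        by_cases hv : v = G.src e
        · exact hv ▸ Relation.ReflTransGen.refl
        · exact Relation.ReflTransGen.head
            ⟨nxt G δ v, Finset.mem_coe.mpr (Finset.mem_erase.mpr
              ⟨hne v hv, nxt_mem hfunc v⟩), src_nxt hfunc v, rfl⟩
            (ih _ (by
              show (stp G δ)^[k] (stp G δ v) = G.src e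
              rw [← Function.iterate_succ_apply]; exact h))
    exact aux k v hk


lemma key_forward {e : E} {τ : Finset E} (h : G.IsSpanningTree τ (G.src e)) :
    G.IsCycle (cycList G (insert e τ) (G.src e)) ∧
    e ∈ (cycList G (insert e τ) (G.src e)).toFinset ∧
    ((cycList G (insert e τ) (G.src e)).toFinset).erase e ⊆ τ := by
  set δ := insert e τ with hδ
  have hfunc : Func G δ := func_insert h rfl
  have hstep : ∀ a b, G.Rel (↑τ : Set E) a b → b = stp G δ a :=
    tree_rel_step hfunc (Finset.subset_insert e τ)
  have hreach : ∀ v, ∃ k, (stp G δ)^[k] v = G.src e :=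
    fun v => reach_iter hstep (h.2.2.2 v (Set.mem_univ v))
  have hret : ∃ n, 0 < n ∧ (stp G δ)^[n] (G.src e) = G.src e := by
    obtain ⟨k, hk⟩ := hreach (stp G δ (G.src e))
    exact ⟨k + 1, Nat.succ_pos k, by rw [Function.iterate_succ_apply]; exact hk⟩
  obtain ⟨hcyc, hmem, htofin⟩ := cycList_isCycle hfunc hret
  have hnr : nxt G δ (G.src e) = e := nxt_eq hfunc (Finset.mem_insert_self e τ) rfl
  rw [hnr] at hmem
  refine ⟨hcyc, List.mem_toFinset.mpr hmem, ?_⟩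
  intro f hf
  obtain ⟨hfe, hfc⟩ := Finset.mem_erase.mp hf
  have hfo : f ∈ orbE G δ (G.src e) := htofin ▸ hfc
  have hfδ : f ∈ δ := (Finset.mem_filter.mp hfo).1
  rcases Finset.mem_insert.mp hfδ with h1 | h1
  · exact absurd h1 hfe
  · exact h1

lemma key_backward {γ δ : Finset E} {e : E} {l : List E} (hl : G.IsCycle l)
    (hlγ : l.toFinset = γ) {e'' : E} {τ'' : Finset E} (he''γ : e'' ∈ γ)
    (ht'' : G.IsSpanningTree τ'' (G.src e'')) (hsub'' : γ.erase e'' ⊆ τ'')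
    (hδ : δ = insert e'' τ'') (heγ : e ∈ γ) :
    G.IsSpanningTree (δ.erase e) (G.src e) ∧ e ∈ δ ∧
      (cycList G δ (G.src e)).toFinset = γ := by
  have hfunc : Func G δ := hδ ▸ func_insert ht'' rfl
  have hγδ : γ ⊆ δ := by
    intro f hf
    by_cases hfe : f = e''
    · rw [hδ, hfe]; exact Finset.mem_insert_self _ _
    · rw [hδ]; exact Finset.mem_insert_of_mem (hsub'' (Finset.mem_erase.mpr ⟨hfe, hf⟩))
  have hsubl : ∀ f ∈ l, f ∈ δ := fun f hf => hγδ (hlγ ▸ List.mem_toFinset.mpr hf)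
  have hel : e ∈ l := List.mem_toFinset.mp (hlγ ▸ heγ)
  have he''l : e'' ∈ l := List.mem_toFinset.mp (hlγ ▸ he''γ)
  obtain ⟨hret, horb, htofin⟩ := cycle_master hfunc hl hsubl hel
  have hreach : ∀ v, ∃ k, (stp G δ)^[k] v = G.src e := by
    intro v
    have hstep : ∀ a b, G.Rel (↑τ'' : Set E) a b → b = stp G δ a :=
      tree_rel_step hfunc (by rw [hδ]; exact Finset.subset_insert _ _)
    obtain ⟨k1, hk1⟩ := reach_iter hstep (ht''.2.2.2 v (Set.mem_univ v))
    obtain ⟨-, horb2, -⟩ := cycle_master hfunc hl hsubl he''l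
    obtain ⟨k2, hk2⟩ := horb2 e hel
    exact ⟨k2 + k1, by rw [Function.iterate_add_apply, hk1, hk2]⟩
  refine ⟨tree_rotate hfunc (hγδ heγ) hreach, hγδ heγ, ?_⟩
  obtain ⟨-, -, htofin2⟩ := cycList_isCycle hfunc hret
  exact htofin2.trans (htofin.symm.trans hlγ)

end Stmt16

/-- Reduced ODE identity: summing the tree-weighted, labeled
reaction vectors over all edges equals summing `Π(σ)`-weighted net reaction
vectors over all cycles (cycles represented by their edge sets). -/
theorem stmt16 {V E : Type} [Fintype V] [Fintype E] (G : Multidigraph V E)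
    (hconn : G.Connected)
    {R : Type} [CommRing R] (π : E → R) {p : ℕ} (w : E → (Fin p → R)) :
    ∑ e : E,
        ((∑ τ ∈ Finset.univ.filter (fun τ : Finset E => G.IsSpanningTree τ (G.src e)),
            ∏ f ∈ τ, π f) * π e) • w e
      = ∑ γ ∈ Finset.univ.filter
            (fun γ : Finset E => ∃ l : List E, G.IsCycle l ∧ l.toFinset = γ),
          (∑ δ ∈ Finset.univ.filter (fun δ : Finset E =>
              ∃ e ∈ γ, ∃ τ : Finset E, G.IsSpanningTree τ (G.src e) ∧
                γ.erase e ⊆ τ ∧ δ = insert e τ),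
            ∏ f ∈ δ, π f) • (∑ e ∈ γ, w e) := by
  cases isEmpty_or_nonempty E with
  | inl hE =>
    have hnil : ∀ l : List E, l = [] := by
      intro l
      cases l with
      | nil => rfl
      | cons a _ => exact (hE.false a).elim
    rw [Finset.univ_eq_empty (α := E), Finset.sum_empty]
    clear hE
    symm
    refine Finset.sum_eq_zero ?_
    intro γ hγ
    rw [Finset.mem_filter] at hγ
    obtain ⟨-, l, hl, -⟩ := hγ
    exact absurd (hnil l) hl.1
  | inr hE =>
    have h1 : (∑ e : E, ((∑ τ ∈ Finset.univ.filter
          (fun τ : Finset E => G.IsSpanningTree τ (G.src e)), ∏ f ∈ τ, π f) * π e) • w e)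
        = ∑ x ∈ (Finset.univ : Finset E).sigma (fun e => Finset.univ.filter
            (fun τ : Finset E => G.IsSpanningTree τ (G.src e))),
            ((∏ f ∈ x.2, π f) * π x.1) • w x.1 := by
      rw [Finset.sum_sigma]
      refine Finset.sum_congr rfl fun e _ => ?_
      rw [Finset.sum_mul, Finset.sum_smul]
    have h3 : (∑ γ ∈ Finset.univ.filter
            (fun γ : Finset E => ∃ l : List E, G.IsCycle l ∧ l.toFinset = γ),
          (∑ δ ∈ Finset.univ.filter (fun δ : Finset E =>
              ∃ e ∈ γ, ∃ τ : Finset E, G.IsSpanningTree τ (G.src e) ∧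
                γ.erase e ⊆ τ ∧ δ = insert e τ),
            ∏ f ∈ δ, π f) • (∑ e ∈ γ, w e))
        = ∑ y ∈ (Finset.univ.filter
            (fun γ : Finset E => ∃ l : List E, G.IsCycle l ∧ l.toFinset = γ)).sigma
            (fun γ => (Finset.univ.filter (fun δ : Finset E =>
              ∃ e ∈ γ, ∃ τ : Finset E, G.IsSpanningTree τ (G.src e) ∧
                γ.erase e ⊆ τ ∧ δ = insert e τ)) ×ˢ γ),
            (∏ f ∈ y.2.1, π f) • w y.2.2 := by
      rw [Finset.sum_sigma]
      refine Finset.sum_congr rfl fun γ _ => ?_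
      rw [Finset.sum_product, Finset.sum_smul]
      refine Finset.sum_congr rfl fun δ _ => ?_
      exact Finset.smul_sum
    rw [h1, h3]
    refine Finset.sum_nbij'
      (fun x => ⟨(Stmt16.cycList G (insert x.1 x.2) (G.src x.1)).toFinset,
        (insert x.1 x.2, x.1)⟩)
      (fun y => ⟨y.2.2, y.2.1.erase y.2.2⟩) ?_ ?_ ?_ ?_ ?_
    · rintro ⟨e, τ⟩ hx
      have ht : G.IsSpanningTree τ (G.src e) :=
        (Finset.mem_filter.mp (Finset.mem_sigma.mp hx).2).2
      obtain ⟨hcyc, hmem, hsub⟩ := Stmt16.key_forward ht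
      refine Finset.mem_sigma.mpr ⟨Finset.mem_filter.mpr ⟨Finset.mem_univ _, _, hcyc, rfl⟩,
        Finset.mem_product.mpr ⟨Finset.mem_filter.mpr ⟨Finset.mem_univ _,
          e, hmem, τ, ht, hsub, rfl⟩, hmem⟩⟩
    · rintro ⟨γ, δ, e⟩ hy
      have hy' := Finset.mem_sigma.mp hy
      obtain ⟨-, l, hl, hlγ⟩ := Finset.mem_filter.mp hy'.1
      have hy2 := Finset.mem_product.mp hy'.2
      obtain ⟨-, e'', he''γ, τ'', ht'', hsub'', hδ⟩ := Finset.mem_filter.mp hy2.1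
      have heγ : e ∈ γ := hy2.2
      obtain ⟨htree, -, -⟩ := Stmt16.key_backward hl hlγ he''γ ht'' hsub'' hδ heγ
      exact Finset.mem_sigma.mpr ⟨Finset.mem_univ _,
        Finset.mem_filter.mpr ⟨Finset.mem_univ _, htree⟩⟩
    · rintro ⟨e, τ⟩ hx
      have ht : G.IsSpanningTree τ (G.src e) :=
        (Finset.mem_filter.mp (Finset.mem_sigma.mp hx).2).2
      have hnm : e ∉ τ := Stmt16.tree_not_mem ht
      show (⟨e, (insert e τ).erase e⟩ : (_ : E) × Finset E) = ⟨e, τ⟩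
      rw [Finset.erase_insert hnm]
    · rintro ⟨γ, δ, e⟩ hy
      have hy' := Finset.mem_sigma.mp hy
      obtain ⟨-, l, hl, hlγ⟩ := Finset.mem_filter.mp hy'.1
      have hy2 := Finset.mem_product.mp hy'.2
      obtain ⟨-, e'', he''γ, τ'', ht'', hsub'', hδ⟩ := Finset.mem_filter.mp hy2.1
      have heγ : e ∈ γ := hy2.2
      obtain ⟨-, heδ, hcyc⟩ := Stmt16.key_backward hl hlγ he''γ ht'' hsub'' hδ heγ
      have h5 : insert e (δ.erase e) = δ := Finset.insert_erase heδ
      show (⟨(Stmt16.cycList G (insert e (δ.erase e)) (G.src e)).toFinset,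
        (insert e (δ.erase e), e)⟩ : (_ : Finset E) × Finset E × E) = ⟨γ, (δ, e)⟩
      rw [h5, hcyc]
    · rintro ⟨e, τ⟩ hx
      have ht : G.IsSpanningTree τ (G.src e) :=
        (Finset.mem_filter.mp (Finset.mem_sigma.mp hx).2).2
      have hnm : e ∉ τ := Stmt16.tree_not_mem ht
      show ((∏ f ∈ τ, π f) * π e) • w e = (∏ f ∈ insert e τ, π f) • w e
      rw [Finset.prod_insert hnm, mul_comm]
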